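/- For every a > 0, the function x ↦ sinh(2πa)/(cosh(2πa) − cos(2πx)) − 1 is periodic with period 1 and has mean value zero over [0,1]. -/

import Mathlib

open Real

theorem periodic_mean_zero (a : ℝ) (ha : 0 < a) :
    Function.Periodic
        (fun x : ℝ => Real.sinh (2 * π * a) / (Real.cosh (2 * π * a) - Real.cos (2 * π * x)) - 1)
        1
      ∧ ∫ x in (0:ℝ)..1,
          (Real.sinh (2 * π * a) / (Real.cosh (2 * π * a) - Real.cos (2 * π * x)) - 1) = 0 := by
  have hb : 0 < 2 * π * a := by positivity
  set b : ℝ := 2 * π * a with hbdef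
  set r : ℝ := Real.exp (-b) with hrdef
  have hr0 : 0 < r := Real.exp_pos _
  have hr1 : r < 1 := by
    rw [hrdef]
    exact Real.exp_lt_one_iff.mpr (by linarith)
  have hcosh : 1 < Real.cosh b := Real.one_lt_cosh.mpr hb.ne'
  have hcoshr : Real.cosh b = (r⁻¹ + r) / 2 := by
    rw [Real.cosh_eq, hrdef, Real.exp_neg, inv_inv]
  have hsinhr : Real.sinh b = (r⁻¹ - r) / 2 := by
    rw [Real.sinh_eq, hrdef, Real.exp_neg, inv_inv]
  have hden : ∀ x : ℝ, 0 < Real.cosh b - Real.cos x := fun x => by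
    nlinarith [Real.cos_le_one x]
  have hden2 : ∀ x : ℝ, (0:ℝ) < 1 - r * Real.cos x := fun x => by
    nlinarith [Real.cos_le_one x, Real.neg_one_le_cos x]
  constructor
  · intro x
    simp only
    have : 2 * π * (x + 1) = 2 * π * x + 2 * π := by ring
    rw [this, Real.cos_add_two_pi]
  · -- FTC with antiderivative G
    set G : ℝ → ℝ := fun x =>
      (1 / π) * Real.arctan (r * Real.sin (2 * π * x) / (1 - r * Real.cos (2 * π * x))) with hG
    have hπ : (0:ℝ) < π := Real.pi_pos
    have hderiv : ∀ x : ℝ,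
        HasDerivAt G (Real.sinh b / (Real.cosh b - Real.cos (2 * π * x)) - 1) x := by
      intro x
      have h1 : HasDerivAt (fun y : ℝ => 2 * π * y) (2 * π) x := by
        simpa using (hasDerivAt_id x).const_mul (2 * π)
      have hs : HasDerivAt (fun y : ℝ => Real.sin (2 * π * y))
          (Real.cos (2 * π * x) * (2 * π)) x := (Real.hasDerivAt_sin _).comp x h1
      have hc : HasDerivAt (fun y : ℝ => Real.cos (2 * π * y))
          (-Real.sin (2 * π * x) * (2 * π)) x := (Real.hasDerivAt_cos _).comp x h1
      have hnum : HasDerivAt (fun y : ℝ => r * Real.sin (2 * π * y))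
          (r * (Real.cos (2 * π * x) * (2 * π))) x := hs.const_mul r
      have hd : HasDerivAt (fun y : ℝ => 1 - r * Real.cos (2 * π * y))
          (-(r * (-Real.sin (2 * π * x) * (2 * π)))) x := (hc.const_mul r).const_sub 1
      have hdn : (1 - r * Real.cos (2 * π * x)) ≠ 0 := (hden2 _).ne'
      have hq : HasDerivAt
          (fun y : ℝ => r * Real.sin (2 * π * y) / (1 - r * Real.cos (2 * π * y)))
          ((r * (Real.cos (2 * π * x) * (2 * π)) * (1 - r * Real.cos (2 * π * x)) -
            r * Real.sin (2 * π * x) * -(r * (-Real.sin (2 * π * x) * (2 * π)))) /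
            (1 - r * Real.cos (2 * π * x)) ^ 2) x := hnum.div hd hdn
      have harc := (Real.hasDerivAt_arctan
          (r * Real.sin (2 * π * x) / (1 - r * Real.cos (2 * π * x)))).comp x hq
      have := harc.const_mul (1 / π)
      convert this using 1
      case e'_4 => rfl
      case e'_5 => rfl
      case e'_8 => rfl
      set c := Real.cos (2 * π * x) with hcdef
      set s := Real.sin (2 * π * x) with hsdef
      have hsc : s ^ 2 + c ^ 2 = 1 := Real.sin_sq_add_cos_sq _
      have hd1 : Real.cosh b - c ≠ 0 := (hden _).ne'
      have hd2 : (1:ℝ) - r * c ≠ 0 := (hden2 _).ne'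
      have hr0' : r ≠ 0 := hr0.ne'
      have e2 : (1:ℝ) - 2 * (r * c) + r ^ 2 = (1 - r * c) ^ 2 + (r * s) ^ 2 := by
        linear_combination (-(r ^ 2)) * hsc
      have e2pos : (0:ℝ) < 1 - 2 * (r * c) + r ^ 2 := by
        rw [e2]
        nlinarith [hden2 (2 * π * x), sq_nonneg (r * s)]
      have hd1' : (r⁻¹ + r) / 2 - c ≠ 0 := by rw [← hcoshr]; exact hd1
      have e2ne : (1:ℝ) - 2 * (r * c) + r ^ 2 ≠ 0 := e2pos.ne'
      have harg : 1 + (r * s / (1 - r * c)) ^ 2 =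
          (1 - 2 * (r * c) + r ^ 2) / (1 - r * c) ^ 2 := by
        rw [e2, div_pow]
        field_simp
      have hA : Real.sinh b / (Real.cosh b - c) - 1 =
          2 * r * (c - r) / (1 - 2 * (r * c) + r ^ 2) := by
        rw [hcoshr, hsinhr, div_sub_one hd1', div_eq_div_iff hd1' e2ne]
        field_simp
        ring
      have hB : 1 / π * (1 / (1 + (r * s / (1 - r * c)) ^ 2) *
          ((r * (c * (2 * π)) * (1 - r * c) - r * s * -(r * (-s * (2 * π)))) /
            (1 - r * c) ^ 2)) = 2 * r * (c - r) / (1 - 2 * (r * c) + r ^ 2) := by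
        have hN : 1 / π * (r * (c * (2 * π)) * (1 - r * c) - r * s * -(r * (-s * (2 * π))))
            = 2 * r * (c - r) := by
          field_simp
          linear_combination (-r) * hsc
        rw [harg, one_div_div, div_mul_div_comm,
          mul_comm (1 - 2 * (r * c) + r ^ 2) ((1 - r * c) ^ 2),
          mul_div_mul_left _ _ (pow_ne_zero 2 hd2), ← mul_div_assoc, hN]
      rw [hA, hB]
    have hcont : Continuous fun x : ℝ =>
        Real.sinh b / (Real.cosh b - Real.cos (2 * π * x)) - 1 := by
      apply Continuous.sub _ continuous_const
      exact continuous_const.div (by fun_prop) fun x => (hden _).ne'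
    have := intervalIntegral.integral_eq_sub_of_hasDerivAt
      (f := G) (a := 0) (b := 1)
      (fun x _ => hderiv x) (hcont.intervalIntegrable 0 1)
    rw [this, hG]
    norm_num [Real.sin_two_pi, Real.cos_two_pi]
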